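/- Let H be a finite set with product Bernoulli measure μ. If f, g : Finset H → ℝ are both increasing, then the functions (1-f) ⋆ (1-g) and (f-1) ⋆ (g-1) coincide, and this common function F(S) is increasing in S. -/

import Mathlib

open Finset

noncomputable section

variable {H : Type*}

/-- P(X,Y) = ∏_{h∈X∩Y} p_h · ∏_{h∈X∖Y} (1-p_h) -/
def wtP [DecidableEq H] (p : H → ℝ) (X Y : Finset H) : ℝ :=
  (∏ h ∈ X ∩ Y, p h) * ∏ h ∈ X \ Y, (1 - p h)

/-- Coupled coin-tossing measure μ_S on pairs of subsets of H. -/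
def muPair [Fintype H] [DecidableEq H] (p : H → ℝ) (S S₁ S₂ : Finset H) : ℝ :=
  if S ∩ S₁ = S ∩ S₂ then
    wtP p S S₁ * wtP p (univ \ S) S₁ * wtP p (univ \ S) S₂
  else 0

/-- Convolution (f ⋆ g)(S) = Σ_{S₁,S₂} f(S₁) g(S₂) μ_S(S₁,S₂). -/
def starC [Fintype H] [DecidableEq H] (p : H → ℝ) (f g : Finset H → ℝ) (S : Finset H) : ℝ :=
  ∑ S₁ : Finset H, ∑ S₂ : Finset H, f S₁ * g S₂ * muPair p S S₁ S₂

/-- Product Bernoulli measure μ(S) = ∏_{h∈S} p_h ∏_{h∉S} (1-p_h). -/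
def muB [Fintype H] [DecidableEq H] (p : H → ℝ) (S : Finset H) : ℝ :=
  (∏ h ∈ S, p h) * ∏ h ∈ Sᶜ, (1 - p h)

/-- Expectation with respect to the product Bernoulli measure. -/
def expB [Fintype H] [DecidableEq H] (p : H → ℝ) (f : Finset H → ℝ) : ℝ :=
  ∑ S : Finset H, f S * muB p S


section myAux
variable {p : H → ℝ} {h : H}

lemma myWtP_nonneg [DecidableEq H] (hp : ∀ h, 0 ≤ p h ∧ p h ≤ 1) (X Y : Finset H) :
    0 ≤ wtP p X Y :=
  mul_nonneg (Finset.prod_nonneg fun h _ => (hp h).1)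
    (Finset.prod_nonneg fun h _ => by linarith [(hp h).2])

lemma myInterInsert [DecidableEq H] {X Y : Finset H} (hX : h ∉ X) :
    X ∩ insert h Y = X ∩ Y := by
  rw [inter_comm, insert_inter_of_notMem hX, inter_comm]

lemma mySdiffInsert [DecidableEq H] {X Y : Finset H} (hX : h ∉ X) :
    X \ insert h Y = X \ Y := by
  ext a; simp only [mem_sdiff, mem_insert]
  constructor
  · rintro ⟨ha, hb⟩; exact ⟨ha, fun hc => hb (Or.inr hc)⟩
  · rintro ⟨ha, hb⟩; refine ⟨ha, ?_⟩; rintro (rfl | hc); exact hX ha; exact hb hc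

lemma myWtP_ins_right [DecidableEq H] {X : Finset H} (hX : h ∉ X) (Y : Finset H) :
    wtP p X (insert h Y) = wtP p X Y := by
  simp only [wtP, myInterInsert hX, mySdiffInsert hX]

lemma myWtP_ins_mem [DecidableEq H] {X Y : Finset H} (hX : h ∉ X) (hY : h ∈ Y) :
    wtP p (insert h X) Y = p h * wtP p X Y := by
  simp only [wtP, insert_inter_of_mem hY, Finset.insert_sdiff_of_mem X hY,
    Finset.prod_insert (show h ∉ X ∩ Y from fun hc => hX (mem_inter.mp hc).1)]
  ring

lemma myWtP_ins_not [DecidableEq H] {X Y : Finset H} (hX : h ∉ X) (hY : h ∉ Y) :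
    wtP p (insert h X) Y = (1 - p h) * wtP p X Y := by
  simp only [wtP, insert_inter_of_notMem hY, Finset.insert_sdiff_of_notMem X hY,
    Finset.prod_insert (show h ∉ X \ Y from fun hc => hX (mem_sdiff.mp hc).1)]
  ring

lemma mySumSplit [Fintype H] [DecidableEq H] (h : H) (F : Finset H → ℝ) :
    ∑ A : Finset H, F A
      = ∑ A ∈ ((univ : Finset H).erase h).powerset, (F A + F (insert h A)) := by
  have key := Finset.sum_powerset_insert (Finset.notMem_erase h univ) F
  rw [insert_erase (mem_univ h), powerset_univ] at key
  rw [sum_add_distrib]; exact key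

lemma mySumSplit2 [Fintype H] [DecidableEq H] (h : H) (F : Finset H → Finset H → ℝ) :
    ∑ A : Finset H, ∑ B : Finset H, F A B
      = ∑ A ∈ ((univ : Finset H).erase h).powerset,
          ∑ B ∈ ((univ : Finset H).erase h).powerset,
            (F A B + F A (insert h B) + F (insert h A) B
              + F (insert h A) (insert h B)) := by
  rw [mySumSplit h (fun A => ∑ B : Finset H, F A B)]
  refine Finset.sum_congr rfl fun A _ => ?_
  rw [mySumSplit h (F A), mySumSplit h (F (insert h A)), ← sum_add_distrib]
  exact Finset.sum_congr rfl fun B _ => by ring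

lemma myStep [Fintype H] [DecidableEq H] (p : H → ℝ) (hp : ∀ h, 0 ≤ p h ∧ p h ≤ 1)
    (f g : Finset H → ℝ)
    (hf : ∀ ⦃S T : Finset H⦄, T ⊆ S → f T ≤ f S)
    (hg : ∀ ⦃S T : Finset H⦄, T ⊆ S → g T ≤ g S)
    (h : H) (T : Finset H) (hT : h ∉ T) :
    starC p f g T ≤ starC p f g (insert h T) := by
  have hU : h ∉ (univ : Finset H) \ insert h T := by simp
  have hcompl : (univ : Finset H) \ T = insert h ((univ : Finset H) \ insert h T) := by
    ext x
    simp only [mem_sdiff, mem_univ, true_and, mem_insert]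
    by_cases hx : x = h
    · subst hx; simp [hT]
    · simp [hx]
  unfold starC
  rw [mySumSplit2 h (fun S₁ S₂ => f S₁ * g S₂ * muPair p T S₁ S₂),
      mySumSplit2 h (fun S₁ S₂ => f S₁ * g S₂ * muPair p (insert h T) S₁ S₂)]
  refine Finset.sum_le_sum fun A hA => Finset.sum_le_sum fun B hB => ?_
  have hA' : h ∉ A := fun hc => Finset.notMem_erase h univ (mem_powerset.mp hA hc)
  have hB' : h ∉ B := fun hc => Finset.notMem_erase h univ (mem_powerset.mp hB hc)
  have iTA : T ∩ insert h A = T ∩ A := myInterInsert hT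
  have iTB : T ∩ insert h B = T ∩ B := myInterInsert hT
  have iSA : insert h T ∩ A = T ∩ A := insert_inter_of_notMem hA'
  have iSB : insert h T ∩ B = T ∩ B := insert_inter_of_notMem hB'
  have iSA' : insert h T ∩ insert h A = insert h (T ∩ A) := by
    rw [insert_inter_of_mem (mem_insert_self h A), iTA]
  have iSB' : insert h T ∩ insert h B = insert h (T ∩ B) := by
    rw [insert_inter_of_mem (mem_insert_self h B), iTB]
  have hhTA : h ∉ T ∩ A := fun hc => hT (mem_inter.mp hc).1
  have hhTB : h ∉ T ∩ B := fun hc => hT (mem_inter.mp hc).1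
  have ne1 : T ∩ A ≠ insert h (T ∩ B) := by
    intro e; rw [e] at hhTA; exact hhTA (mem_insert_self _ _)
  have ne2 : insert h (T ∩ A) ≠ T ∩ B := by
    intro e; rw [← e] at hhTB; exact hhTB (mem_insert_self _ _)
  by_cases hc : T ∩ A = T ∩ B
  · have e4 : insert h T ∩ insert h A = insert h T ∩ insert h B := by
      rw [iSA', iSB', hc]
    set q := p h with hq
    set a := wtP p T A with ha
    set b := wtP p ((univ : Finset H) \ insert h T) A with hb
    set d := wtP p ((univ : Finset H) \ insert h T) B with hd
    have mT1 : muPair p T A B = a * ((1-q)*b) * ((1-q)*d) := by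
      simp only [muPair, if_pos hc, hcompl, myWtP_ins_not hU hA', myWtP_ins_not hU hB']
      rfl
    have mT2 : muPair p T A (insert h B) = a * ((1-q)*b) * (q*d) := by
      simp only [muPair, iTB, if_pos hc, hcompl, myWtP_ins_not hU hA',
        myWtP_ins_mem hU (mem_insert_self h B), myWtP_ins_right hU]
      rfl
    have mT3 : muPair p T (insert h A) B = a * (q*b) * ((1-q)*d) := by
      simp only [muPair, iTA, if_pos hc, hcompl, myWtP_ins_not hU hB',
        myWtP_ins_mem hU (mem_insert_self h A), myWtP_ins_right hU, myWtP_ins_right hT]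
      rfl
    have mT4 : muPair p T (insert h A) (insert h B) = a * (q*b) * (q*d) := by
      simp only [muPair, iTA, iTB, if_pos hc, hcompl,
        myWtP_ins_mem hU (mem_insert_self h A), myWtP_ins_mem hU (mem_insert_self h B),
        myWtP_ins_right hU, myWtP_ins_right hT]
      rfl
    have mS1 : muPair p (insert h T) A B = ((1-q)*a) * b * d := by
      simp only [muPair, iSA, iSB, if_pos hc, myWtP_ins_not hT hA']
      rfl
    have mS2 : muPair p (insert h T) A (insert h B) = 0 := by
      simp only [muPair, iSA, iSB', if_neg ne1]
    have mS3 : muPair p (insert h T) (insert h A) B = 0 := by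
      simp only [muPair, iSA', iSB, if_neg ne2]
    have mS4 : muPair p (insert h T) (insert h A) (insert h B) = (q*a) * b * d := by
      simp only [muPair, if_pos e4, myWtP_ins_mem hT (mem_insert_self h A),
        myWtP_ins_right hT, myWtP_ins_right hU]
      rfl
    rw [mT1, mT2, mT3, mT4, mS1, mS2, mS3, mS4]
    have ha0 : 0 ≤ a := myWtP_nonneg hp T A
    have hb0 : 0 ≤ b := myWtP_nonneg hp _ A
    have hd0 : 0 ≤ d := myWtP_nonneg hp _ B
    have hq0 : 0 ≤ q := (hp h).1
    have hq1 : q ≤ 1 := (hp h).2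
    have hfd : f A ≤ f (insert h A) := hf (subset_insert h A)
    have hgd : g B ≤ g (insert h B) := hg (subset_insert h B)
    have key : f A * g B * (((1-q)*a) * b * d) + 0
          + 0 + f (insert h A) * g (insert h B) * ((q*a) * b * d)
        - (f A * g B * (a * ((1-q)*b) * ((1-q)*d))
          + f A * g (insert h B) * (a * ((1-q)*b) * (q*d))
          + f (insert h A) * g B * (a * (q*b) * ((1-q)*d))
          + f (insert h A) * g (insert h B) * (a * (q*b) * (q*d)))
        = (a*b*d) * (q*(1-q))
            * ((f (insert h A) - f A) * (g (insert h B) - g B)) := by ring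
    have pos : 0 ≤ (a*b*d) * (q*(1-q))
        * ((f (insert h A) - f A) * (g (insert h B) - g B)) :=
      mul_nonneg (mul_nonneg (mul_nonneg (mul_nonneg ha0 hb0) hd0)
        (mul_nonneg hq0 (by linarith))) (mul_nonneg (by linarith) (by linarith))
    nlinarith [key, pos]
  · have ne3 : insert h (T ∩ A) ≠ insert h (T ∩ B) := by
      intro e
      exact hc (by rw [← Finset.erase_insert hhTA, ← Finset.erase_insert hhTB, e])
    have mT1 : muPair p T A B = 0 := by simp only [muPair, if_neg hc]
    have mT2 : muPair p T A (insert h B) = 0 := by simp only [muPair, iTB, if_neg hc]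
    have mT3 : muPair p T (insert h A) B = 0 := by simp only [muPair, iTA, if_neg hc]
    have mT4 : muPair p T (insert h A) (insert h B) = 0 := by
      simp only [muPair, iTA, iTB, if_neg hc]
    have mS1 : muPair p (insert h T) A B = 0 := by
      simp only [muPair, iSA, iSB, if_neg hc]
    have mS2 : muPair p (insert h T) A (insert h B) = 0 := by
      simp only [muPair, iSA, iSB', if_neg ne1]
    have mS3 : muPair p (insert h T) (insert h A) B = 0 := by
      simp only [muPair, iSA', iSB, if_neg ne2]
    have mS4 : muPair p (insert h T) (insert h A) (insert h B) = 0 := by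
      simp only [muPair, iSA', iSB', if_neg ne3]
    rw [mT1, mT2, mT3, mT4, mS1, mS2, mS3, mS4]

lemma myMono [Fintype H] [DecidableEq H] (p : H → ℝ) (hp : ∀ h, 0 ≤ p h ∧ p h ≤ 1)
    (f g : Finset H → ℝ)
    (hf : ∀ ⦃S T : Finset H⦄, T ⊆ S → f T ≤ f S)
    (hg : ∀ ⦃S T : Finset H⦄, T ⊆ S → g T ≤ g S)
    ⦃S T : Finset H⦄ (hTS : T ⊆ S) : starC p f g T ≤ starC p f g S := by
  have main : ∀ U : Finset H, Disjoint U T → starC p f g T ≤ starC p f g (T ∪ U) := by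
    intro U
    induction U using Finset.induction_on with
    | empty => intro _; simp
    | @insert a U ha ih =>
      intro hdisj
      obtain ⟨haT, hd⟩ := disjoint_insert_left.mp hdisj
      have haTU : a ∉ T ∪ U := by simp [haT, ha]
      calc starC p f g T ≤ starC p f g (T ∪ U) := ih hd
        _ ≤ starC p f g (insert a (T ∪ U)) := myStep p hp f g hf hg a _ haTU
        _ = starC p f g (T ∪ insert a U) := by rw [union_insert]
  have hmain := main (S \ T) Finset.sdiff_disjoint
  rwa [Finset.union_sdiff_of_subset hTS] at hmain

end myAux

theorem neither_network_increasing [Fintype H] [DecidableEq H] (p : H → ℝ)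
    (hp : ∀ h, 0 ≤ p h ∧ p h ≤ 1) (f g : Finset H → ℝ)
    (hf : ∀ ⦃S T : Finset H⦄, T ⊆ S → f T ≤ f S)
    (hg : ∀ ⦃S T : Finset H⦄, T ⊆ S → g T ≤ g S) :
    (∀ S : Finset H,
      starC p (fun A => 1 - f A) (fun A => 1 - g A) S
        = starC p (fun A => f A - 1) (fun A => g A - 1) S) ∧
    (∀ ⦃S T : Finset H⦄, T ⊆ S →
      starC p (fun A => 1 - f A) (fun A => 1 - g A) T
        ≤ starC p (fun A => 1 - f A) (fun A => 1 - g A) S) := by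
  have eq1 : ∀ S : Finset H,
      starC p (fun A => 1 - f A) (fun A => 1 - g A) S
        = starC p (fun A => f A - 1) (fun A => g A - 1) S := by
    intro S
    unfold starC
    exact Finset.sum_congr rfl fun S₁ _ => Finset.sum_congr rfl fun S₂ _ => by ring
  refine ⟨eq1, fun S T hTS => ?_⟩
  rw [eq1 T, eq1 S]
  exact myMono p hp (fun A => f A - 1) (fun A => g A - 1)
    (fun S T h => by have := hf h; show f T - 1 ≤ f S - 1; linarith)
    (fun S T h => by have := hg h; show g T - 1 ≤ g S - 1; linarith) hTS
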